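/- Let G be a minimal basic generator matrix of a convolutional code C. For every α ∈ ℕ, the set of atomic polynomial codewords of C of weight at most α is finite. -/

import Mathlib

open Polynomial Matrix
open scoped Classical

/-- Embedding of polynomials into formal Laurent series. -/
noncomputable def polyToLS (F : Type*) [Field F] : Polynomial F →+* LaurentSeries F :=
  (HahnSeries.ofPowerSeries ℤ F).comp Polynomial.coeToPowerSeries.ringHom

/-- The convolutional code generated by `G`: all `u·G` with `u` a Laurent-series row vector. -/
noncomputable def convCode {F : Type*} [Field F] {k n : ℕ}
    (G : Matrix (Fin k) (Fin n) (Polynomial F)) : Set (Fin n → LaurentSeries F) :=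
  {v | ∃ u : Fin k → LaurentSeries F, v = Matrix.vecMul u (G.map (polyToLS F))}

/-- `G` is basic: it has a polynomial right inverse. -/
def IsBasic {F : Type*} [Field F] {k n : ℕ} (G : Matrix (Fin k) (Fin n) (Polynomial F)) : Prop :=
  ∃ H : Matrix (Fin n) (Fin k) (Polynomial F), G * H = 1

/-- The overall constraint length: maximal degree of a (full-size) `k`-minor of `G`. -/
noncomputable def ocl {F : Type*} [Field F] {k n : ℕ}
    (G : Matrix (Fin k) (Fin n) (Polynomial F)) : ℕ :=
  Finset.univ.sup fun f : Fin k ↪ Fin n => ((G.submatrix id f).det).natDegree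

/-- The degree of the `i`-th row of `G` (in `WithBot ℕ`, so `deg 0 = ⊥`). -/
noncomputable def rowDeg {F : Type*} [Field F] {k n : ℕ}
    (G : Matrix (Fin k) (Fin n) (Polynomial F)) (i : Fin k) : WithBot ℕ :=
  Finset.univ.sup fun j => (G i j).degree

/-- The state-index set of the controller canonical form for row degrees `γ`. -/
abbrev StateIdx {k : ℕ} (γ : Fin k → ℕ) := Σ i : Fin k, Fin (γ i)

/-- State matrix `A` of the controller canonical form (block diagonal nilpotent shifts). -/
def ccfA (F : Type*) [Field F] {k : ℕ} (γ : Fin k → ℕ) :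
    Matrix (StateIdx γ) (StateIdx γ) F :=
  fun s t => if s.1 = t.1 ∧ (t.2 : ℕ) = (s.2 : ℕ) + 1 then 1 else 0

/-- Input matrix `B` of the controller canonical form. -/
def ccfB (F : Type*) [Field F] {k : ℕ} (γ : Fin k → ℕ) :
    Matrix (Fin k) (StateIdx γ) F :=
  fun i s => if s.1 = i ∧ (s.2 : ℕ) = 0 then 1 else 0

/-- Output matrix `C` of the controller canonical form: higher coefficient rows of `G`. -/
noncomputable def ccfC {F : Type*} [Field F] {k n : ℕ} (γ : Fin k → ℕ)
    (G : Matrix (Fin k) (Fin n) (Polynomial F)) : Matrix (StateIdx γ) (Fin n) F :=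
  fun s j => (G s.1 j).coeff ((s.2 : ℕ) + 1)

/-- Feedthrough matrix `D`: the constant coefficient matrix of `G`. -/
noncomputable def ccfD {F : Type*} [Field F] {k n : ℕ}
    (G : Matrix (Fin k) (Fin n) (Polynomial F)) : Matrix (Fin k) (Fin n) F :=
  fun i j => (G i j).coeff 0

/-- Hamming weight of a vector. -/
noncomputable def hamWt {F : Type*} [Field F] {ι : Type*} (v : ι → F) : ℕ :=
  Nat.card {j : ι // v j ≠ 0}


/-- A polynomial codeword `v` (with `v₀ ≠ 0`) is atomic if it is not the sum of two
nonzero, non-overlapping polynomial codewords. -/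
def IsAtomicCW {F : Type*} [Field F] {k n : ℕ}
    (G : Matrix (Fin k) (Fin n) (Polynomial F)) (v : Fin n → Polynomial F) : Prop :=
  (∃ u : Fin k → Polynomial F, v = Matrix.vecMul u G) ∧
  (fun j => (v j).coeff 0) ≠ (0 : Fin n → F) ∧
  ¬ ∃ (L : ℕ) (vt vh : Fin n → Polynomial F), 1 ≤ L ∧
      (∃ w : Fin k → Polynomial F, vt = Matrix.vecMul w G) ∧
      (∃ w : Fin k → Polynomial F, vh = Matrix.vecMul w G) ∧
      vt ≠ 0 ∧ vh ≠ 0 ∧ v = vt + vh ∧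
      (∀ j, (vt j).degree < (L : WithBot ℕ)) ∧
      (∀ j, ∀ t : ℕ, t < L → (vh j).coeff t = 0)

/-- The weight of a polynomial vector: the total number of nonzero coefficients. -/
def polyWt {F : Type*} [Field F] {n : ℕ} (v : Fin n → Polynomial F) : ℕ :=
  ∑ j, (v j).support.card


section Aux

open Polynomial Matrix

variable {F : Type*} [Field F] {k n : ℕ}

/-- Truncation of a polynomial below `N`. -/
noncomputable def ptrunc (N : ℕ) (p : Polynomial F) : Polynomial F :=
  ∑ t ∈ Finset.range N, Polynomial.monomial t (p.coeff t)

lemma coeff_ptrunc (N : ℕ) (p : Polynomial F) (t : ℕ) :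
    (ptrunc N p).coeff t = if t < N then p.coeff t else 0 := by
  simp only [ptrunc, Polynomial.finset_sum_coeff, Polynomial.coeff_monomial,
    Finset.sum_ite_eq' (Finset.range N) t, Finset.mem_range]

lemma vecMul_coeff (u : Fin k → Polynomial F) (G : Matrix (Fin k) (Fin n) (Polynomial F))
    (j : Fin n) (t : ℕ) :
    ((Matrix.vecMul u G) j).coeff t
      = ∑ i, ∑ p ∈ Finset.HasAntidiagonal.antidiagonal t, (u i).coeff p.1 * (G i j).coeff p.2 := by
  simp [Matrix.vecMul, dotProduct, Polynomial.finset_sum_coeff, Polynomial.coeff_mul]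

lemma degree_lt_of_coeff_eq_zero (p : Polynomial F) (N : ℕ)
    (h : ∀ s, N ≤ s → p.coeff s = 0) : p.degree < (N : WithBot ℕ) :=
  (Polynomial.degree_lt_iff_coeff_zero p N).mpr (fun s hs => h s (by exact_mod_cast hs))

/-- Key lemma: an atomic codeword cannot have a long run of zero coefficients followed by
a nonzero coefficient. -/
lemma atomic_gap (G : Matrix (Fin k) (Fin n) (Polynomial F))
    (H : Matrix (Fin n) (Fin k) (Polynomial F)) (hGH : G * H = 1)
    (m mh : ℕ)
    (hm : ∀ i j s, m < s → (G i j).coeff s = 0)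
    (hmh : ∀ j i s, mh < s → (H j i).coeff s = 0)
    (v : Fin n → Polynomial F) (hv : IsAtomicCW G v)
    (L : ℕ) (hL : 1 ≤ L)
    (hgap : ∀ j s, L ≤ s → s ≤ L + m + mh → (v j).coeff s = 0)
    (htail : ∃ j s, L + m + mh < s ∧ (v j).coeff s ≠ 0) : False := by
  obtain ⟨⟨u, huv⟩, h0, hnodec⟩ := hv
  have hu : u = Matrix.vecMul v H := by
    rw [huv, Matrix.vecMul_vecMul, hGH, Matrix.vecMul_one]
  -- the gap propagates to u on [L+mh, L+m+mh]
  have hugap : ∀ i s, L + mh ≤ s → s ≤ L + m + mh → (u i).coeff s = 0 := by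
    intro i s hs1 hs2
    rw [hu, vecMul_coeff]
    refine Finset.sum_eq_zero fun j _ => Finset.sum_eq_zero fun p hp => ?_
    have hps : p.1 + p.2 = s := Finset.HasAntidiagonal.mem_antidiagonal.mp hp
    by_cases h2 : mh < p.2
    · rw [hmh j i p.2 h2, mul_zero]
    · push_neg at h2
      have h1 : L ≤ p.1 := by omega
      have h1' : p.1 ≤ L + m + mh := by omega
      rw [hgap j p.1 h1 h1', zero_mul]
  set T := L + mh with hT
  set ut : Fin k → Polynomial F := fun i => ptrunc T (u i) with hut
  set uh : Fin k → Polynomial F := fun i => u i - ut i with huh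
  have hsum : u = ut + uh := by
    funext i; simp [huh]
  have hutc : ∀ i s, T ≤ s → (ut i).coeff s = 0 := by
    intro i s hs; rw [hut]; simp [coeff_ptrunc, Nat.not_lt.mpr hs]
  have huhc : ∀ i s, s ≤ L + m + mh → (uh i).coeff s = 0 := by
    intro i s hs
    simp only [huh, Polynomial.coeff_sub, hut, coeff_ptrunc]
    by_cases h : s < T
    · simp [h]
    · push_neg at h
      rw [if_neg (Nat.not_lt.mpr h), hugap i s h hs, sub_zero]
  set L' := L + m + mh with hL'
  set vt := Matrix.vecMul ut G with hvt
  set vh := Matrix.vecMul uh G with hvh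
  have hvsum : v = vt + vh := by
    rw [huv, hsum, Matrix.add_vecMul]
  -- vt has all coefficients ≥ L' equal to zero
  have hvtc : ∀ j s, L' ≤ s → (vt j).coeff s = 0 := by
    intro j s hs
    rw [hvt, vecMul_coeff]
    refine Finset.sum_eq_zero fun i _ => Finset.sum_eq_zero fun p hp => ?_
    have hps : p.1 + p.2 = s := Finset.HasAntidiagonal.mem_antidiagonal.mp hp
    by_cases h1 : T ≤ p.1
    · rw [hutc i p.1 h1, zero_mul]
    · push_neg at h1
      have : m < p.2 := by omega
      rw [hm i j p.2 this, mul_zero]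
  -- vh has all coefficients < L' equal to zero
  have hvhc : ∀ j s, s < L' → (vh j).coeff s = 0 := by
    intro j s hs
    rw [hvh, vecMul_coeff]
    refine Finset.sum_eq_zero fun i _ => Finset.sum_eq_zero fun p hp => ?_
    have hps : p.1 + p.2 = s := Finset.HasAntidiagonal.mem_antidiagonal.mp hp
    have : p.1 ≤ L + m + mh := by omega
    rw [huhc i p.1 this, zero_mul]
  -- vt ≠ 0
  have hvt0 : vt ≠ 0 := by
    obtain ⟨j0, hj0⟩ : ∃ j0, (v j0).coeff 0 ≠ 0 := by
      by_contra hc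
      push_neg at hc
      exact h0 (funext fun j => hc j)
    intro hz
    have h1 : (vt j0).coeff 0 = (v j0).coeff 0 := by
      have := congrFun hvsum j0
      rw [this, Pi.add_apply, Polynomial.coeff_add, hvhc j0 0 (by omega), add_zero]
    rw [hz] at h1
    simp at h1
    exact hj0 h1.symm
  -- vh ≠ 0
  obtain ⟨j1, s1, hs1, hne⟩ := htail
  have hvh0 : vh ≠ 0 := by
    intro hz
    have h1 : (vh j1).coeff s1 = (v j1).coeff s1 := by
      have := congrFun hvsum j1
      rw [this, Pi.add_apply, Polynomial.coeff_add, hvtc j1 s1 (by omega), zero_add]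
    rw [hz] at h1
    simp at h1
    exact hne h1.symm
  exact hnodec ⟨L', vt, vh, by omega, ⟨ut, rfl⟩, ⟨uh, rfl⟩, hvt0, hvh0, hvsum,
    fun j => degree_lt_of_coeff_eq_zero _ _ (fun s hs => hvtc j s hs),
    fun j t ht => hvhc j t ht⟩

/-- Chain-bound lemma for finite sets of naturals. -/
lemma chain_bound (g : ℕ) (S : Finset ℕ)
    (h : ∀ t ∈ S, t ≠ 0 → ∃ s ∈ S, s < t ∧ t ≤ s + g) :
    ∀ t ∈ S, t ≤ g * (S.filter (· < t)).card := by
  intro t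
  induction t using Nat.strong_induction_on with
  | _ t ih =>
    intro ht
    rcases Nat.eq_zero_or_pos t with h0 | hpos
    · omega
    · obtain ⟨s, hsS, hst, hle⟩ := h t ht (by omega)
      have ihs := ih s hst hsS
      have hcard : (S.filter (· < s)).card + 1 ≤ (S.filter (· < t)).card := by
        have hns : s ∉ S.filter (· < s) := by simp
        have hsub : insert s (S.filter (· < s)) ⊆ S.filter (· < t) := by
          intro x hx
          rcases Finset.mem_insert.mp hx with rfl | hx
          · exact Finset.mem_filter.mpr ⟨hsS, by simpa using hst⟩
          · obtain ⟨hx1, hx2⟩ := Finset.mem_filter.mp hx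
            exact Finset.mem_filter.mpr ⟨hx1, by omega⟩
        calc (S.filter (· < s)).card + 1 = (insert s (S.filter (· < s))).card := by
              rw [Finset.card_insert_of_notMem hns]
          _ ≤ (S.filter (· < t)).card := Finset.card_le_card hsub
      calc t ≤ s + g := hle
        _ ≤ g * (S.filter (· < s)).card + g := by omega
        _ = g * ((S.filter (· < s)).card + 1) := by ring
        _ ≤ g * (S.filter (· < t)).card := Nat.mul_le_mul_left _ hcard

end Aux

theorem stmt13 {F : Type*} [Field F] [Fintype F] {k n : ℕ}
    (G : Matrix (Fin k) (Fin n) (Polynomial F)) (γ : Fin k → ℕ)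
    (hbasic : IsBasic G)
    (hγ : ∀ i, rowDeg G i = (γ i : WithBot ℕ))
    (hmin : ocl G = ∑ i, γ i)
    (α : ℕ) :
    Set.Finite {v : Fin n → Polynomial F | IsAtomicCW G v ∧ polyWt v ≤ α} := by
  obtain ⟨H, hGH⟩ := hbasic
  set m : ℕ := Finset.univ.sup fun ij : Fin k × Fin n => (G ij.1 ij.2).natDegree with hmdef
  set mh : ℕ := Finset.univ.sup fun ij : Fin n × Fin k => (H ij.1 ij.2).natDegree with hmhdef
  have hm : ∀ i j s, m < s → (G i j).coeff s = 0 := by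
    intro i j s hs
    refine Polynomial.coeff_eq_zero_of_natDegree_lt (lt_of_le_of_lt ?_ hs)
    exact Finset.le_sup (f := fun ij : Fin k × Fin n => (G ij.1 ij.2).natDegree)
      (Finset.mem_univ (i, j))
  have hmh : ∀ j i s, mh < s → (H j i).coeff s = 0 := by
    intro j i s hs
    refine Polynomial.coeff_eq_zero_of_natDegree_lt (lt_of_le_of_lt ?_ hs)
    exact Finset.le_sup (f := fun ij : Fin n × Fin k => (H ij.1 ij.2).natDegree)
      (Finset.mem_univ (j, i))
  set g : ℕ := m + mh + 1 with hgdef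
  set N : ℕ := g * α + 1 with hNdef
  -- every element of the set has all coefficients ≥ N equal to zero
  have hbound : ∀ v ∈ {v : Fin n → Polynomial F | IsAtomicCW G v ∧ polyWt v ≤ α},
      ∀ j t, N ≤ t → (v j).coeff t = 0 := by
    rintro v ⟨hv, hwt⟩ j t ht
    by_contra hne
    set S : Finset ℕ := Finset.univ.biUnion (fun j : Fin n => (v j).support) with hSdef
    have hmemS : ∀ s : ℕ, s ∈ S ↔ ∃ j, (v j).coeff s ≠ 0 := by
      intro s
      simp [hSdef, Polynomial.mem_support_iff]
    have hScard : S.card ≤ α := by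
      calc S.card ≤ ∑ j, (v j).support.card := Finset.card_biUnion_le
        _ ≤ α := hwt
    have h0S : (0 : ℕ) ∈ S := by
      rw [hmemS]
      by_contra hc
      push_neg at hc
      exact hv.2.1 (funext fun j => hc j)
    have hstep : ∀ t' ∈ S, t' ≠ 0 → ∃ s ∈ S, s < t' ∧ t' ≤ s + g := by
      intro t' ht' ht0
      set P := S.filter (· < t') with hPdef
      have hPne : P.Nonempty := ⟨0, Finset.mem_filter.mpr ⟨h0S, by simpa using Nat.pos_of_ne_zero ht0⟩⟩
      set s := P.max' hPne with hsdef
      have hsP : s ∈ P := Finset.max'_mem P hPne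
      obtain ⟨hsS, hst⟩ := Finset.mem_filter.mp hsP
      have hst : s < t' := by simpa using hst
      refine ⟨s, hsS, hst, ?_⟩
      by_contra hc
      push_neg at hc
      -- hc : s + g < t'
      refine atomic_gap G H hGH m mh hm hmh v hv (s + 1) (by omega) ?_ ?_
      · intro j' r hr1 hr2
        by_contra hrne
        have hrS : r ∈ S := (hmemS r).mpr ⟨j', hrne⟩
        have hrP : r ∈ P := Finset.mem_filter.mpr ⟨hrS, by omega⟩
        have := Finset.le_max' P r hrP
        omega
      · obtain ⟨j', hj'⟩ := (hmemS t').mp ht'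
        exact ⟨j', t', by omega, hj'⟩
    have htS : t ∈ S := (hmemS t).mpr ⟨j, hne⟩
    have := chain_bound g S hstep t htS
    have hle : (S.filter (· < t)).card ≤ S.card := Finset.card_filter_le _ _
    have : t ≤ g * α := le_trans this (le_trans (Nat.mul_le_mul_left _ hle)
      (Nat.mul_le_mul_left _ hScard))
    omega
  -- inject into a finite type
  set f : (Fin n → Polynomial F) → (Fin n → Fin N → F) :=
    fun v j t => (v j).coeff t with hfdef
  apply Set.Finite.of_finite_image (f := f) (Set.toFinite _)
  intro v hv w hw hfvw
  funext j
  ext t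
  by_cases ht : t < N
  · have := congrFun (congrFun hfvw j) ⟨t, ht⟩
    simpa [hfdef] using this
  · push_neg at ht
    rw [hbound v hv j t ht, hbound w hw j t ht]
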